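/- Suppose that for every pair 0 < β < α^2 < 1 the number of divisors of any positive integer m in [m^α, m^α + m^β] is O(1/(α^2−β)). Then for every ε ∈ (0, 2/3) there is a constant C such that: for all large N, every integer m has at most C/ε ordered representations m = u^3 + v^3 with N ≤ u, v ≤ N + N^{2/3−ε}. -/

import Mathlib

open Real Finset

private lemma rpow_ge_of_ge {c p : ℝ} (hc : 0 < c) (hp : 0 < p) {N : ℝ}
    (hN : c ^ (1/p) ≤ N) : c ≤ N ^ p := by
  have h0 : (0:ℝ) ≤ c ^ (1/p) := (Real.rpow_pos_of_pos hc _).le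
  have h := Real.rpow_le_rpow h0 hN hp.le
  rwa [← Real.rpow_mul hc.le, one_div, inv_mul_cancel₀ hp.ne', Real.rpow_one] at h

private lemma pair_eq_of {d u v x y : ℤ} (hd : d ≠ 0)
    (h1 : u + v = d) (h2 : x + y = d) (h3 : u^3+v^3 = x^3+y^3) :
    (x = u ∧ y = v) ∨ (x = v ∧ y = u) := by
  have hv : v = d - u := by linarith
  have hy : y = d - x := by linarith
  subst hv hy
  have key : 3*d*((u-x)*(u+x-d)) = 0 := by linear_combination h3
  have key2 : (u-x)*(u+x-d) = 0 := by
    rcases mul_eq_zero.mp key with h | h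
    · exfalso; omega
    · exact h
  rcases mul_eq_zero.mp key2 with h | h
  · left; constructor <;> linarith
  · right; constructor <;> linarith

set_option maxHeartbeats 1600000 in
theorem energy_bound_from_divisor_conjecture
    (hdiv : ∃ C₀ : ℝ, 0 < C₀ ∧ ∀ α β : ℝ, 0 < α → α < 1 → 0 < β → β < α ^ 2 →
      ∀ m : ℕ, 0 < m →
        (((m.divisors.filter
            (fun d : ℕ => (m : ℝ) ^ α ≤ (d : ℝ) ∧
              (d : ℝ) ≤ (m : ℝ) ^ α + (m : ℝ) ^ β)).card : ℝ)) ≤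
          C₀ / (α ^ 2 - β)) :
    ∀ ε : ℝ, 0 < ε → ε < 2 / 3 →
      ∃ C : ℝ, 0 < C ∧ ∃ N₀ : ℕ, ∀ N : ℕ, N₀ ≤ N → ∀ m : ℕ,
        (((((Finset.Icc N (N + ⌊(N : ℝ) ^ (2 / 3 - ε)⌋₊)) ×ˢ
            (Finset.Icc N (N + ⌊(N : ℝ) ^ (2 / 3 - ε)⌋₊))).filter
              (fun p => p.1 ^ 3 + p.2 ^ 3 = m)).card : ℝ)) ≤ C / ε := by
  obtain ⟨C₀, hC₀, hdiv⟩ := hdiv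
  intro ε hε hε2
  set ε' : ℝ := min ε (1/9) with hε'def
  have hε'pos : 0 < ε' := lt_min hε (by norm_num)
  have hε'le : ε' ≤ 1/9 := min_le_right _ _
  have hε'ge : ε/6 ≤ ε' := by
    rcases le_total ε (1/9) with h | h
    · rw [hε'def, min_eq_left h]; linarith
    · rw [hε'def, min_eq_right h]; linarith
  set e₂ : ℝ := min (ε/2) (1/18) with he₂def
  have he₂pos : 0 < e₂ := lt_min (by linarith) (by norm_num)
  have he₁ : e₂ ≤ 2*ε - 3*ε'/2 := by
    rcases le_total ε (1/9) with h | h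
    · rw [hε'def, min_eq_left h]
      calc e₂ ≤ ε/2 := min_le_left _ _
        _ ≤ 2*ε - 3*ε/2 := by linarith
    · rw [hε'def, min_eq_right h]
      calc e₂ ≤ 1/18 := min_le_right _ _
        _ ≤ 2*ε - 3*(1/9)/2 := by linarith
  set β : ℝ := 1/9 - ε'/2 with hβdef
  have hβ0 : 0 < β := by rw [hβdef]; linarith
  refine ⟨48*C₀, by positivity, max 8 (⌈max ((3:ℝ)^((3:ℝ)/2)) (max ((4:ℝ)^(1/e₂))
      (Real.exp (8/(27*ε'))))⌉₊ + 1), ?_⟩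
  intro N hN m
  have hN8 : 8 ≤ N := le_trans (le_max_left _ _) hN
  have hNbig : max ((3:ℝ)^((3:ℝ)/2)) (max ((4:ℝ)^(1/e₂)) (Real.exp (8/(27*ε')))) ≤ (N:ℝ) := by
    have h1 : ⌈max ((3:ℝ)^((3:ℝ)/2)) (max ((4:ℝ)^(1/e₂)) (Real.exp (8/(27*ε'))))⌉₊ ≤ N :=
      le_trans (le_trans (Nat.le_succ _) (le_max_right _ _)) hN
    exact le_trans (Nat.le_ceil _) (by exact_mod_cast h1)
  have hNc1 : (3:ℝ)^((3:ℝ)/2) ≤ (N:ℝ) := le_trans (le_max_left _ _) hNbig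
  have hNc2 : (4:ℝ)^(1/e₂) ≤ (N:ℝ) :=
    le_trans (le_trans (le_max_left _ _) (le_max_right _ _)) hNbig
  have hNc3 : Real.exp (8/(27*ε')) ≤ (N:ℝ) :=
    le_trans (le_trans (le_max_right _ _) (le_max_right _ _)) hNbig
  have hN0 : (0:ℝ) < N := by
    have : (8:ℝ) ≤ N := by exact_mod_cast hN8
    linarith
  have hN1 : (1:ℝ) ≤ N := by
    have : (8:ℝ) ≤ N := by exact_mod_cast hN8
    linarith
  have hN23 : (3:ℝ) ≤ (N:ℝ)^((2:ℝ)/3) := by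
    refine rpow_ge_of_ge (by norm_num) (by norm_num) ?_
    convert hNc1 using 2
    norm_num
  have hNe2 : (4:ℝ) ≤ (N:ℝ)^e₂ := rpow_ge_of_ge (by norm_num) he₂pos hNc2
  have hlogN : 8/(27*ε') ≤ Real.log N := by
    rw [← Real.log_exp (8/(27*ε'))]
    exact Real.log_le_log (Real.exp_pos _) hNc3
  have hlogN1 : 1 ≤ Real.log N := by
    rw [← Real.log_exp 1]
    refine Real.log_le_log (Real.exp_pos _) ?_
    have h8 : (8:ℝ) ≤ N := by exact_mod_cast hN8
    have := Real.exp_one_lt_d9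
    linarith
  set H : ℕ := ⌊(N : ℝ) ^ (2 / 3 - ε)⌋₊ with hHdef
  set Hr : ℝ := (N : ℝ) ^ (2 / 3 - ε) with hHrdef
  have hHr0 : 0 ≤ Hr := Real.rpow_nonneg hN0.le _
  have hHle : (H:ℝ) ≤ Hr := Nat.floor_le hHr0
  have hHN : H ≤ N := by
    have h1 : Hr ≤ (N:ℝ) := by
      have := Real.rpow_le_rpow_of_exponent_le hN1 (show 2/3 - ε ≤ 1 by linarith)
      rwa [Real.rpow_one] at this
    have := Nat.floor_le_floor (R := ℝ) h1
    rwa [Nat.floor_natCast] at this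
  set S : Finset (ℕ × ℕ) := ((Finset.Icc N (N + H)) ×ˢ (Finset.Icc N (N + H))).filter
      (fun p => p.1 ^ 3 + p.2 ^ 3 = m) with hSdef
  show (S.card : ℝ) ≤ 48*C₀/ε
  rcases S.eq_empty_or_nonempty with hSe | ⟨⟨u₀, v₀⟩, hp₀⟩
  · rw [hSe]; simp; positivity
  -- extract facts about a member of S
  have memS : ∀ p : ℕ × ℕ, p ∈ S →
      N ≤ p.1 ∧ p.1 ≤ N + H ∧ N ≤ p.2 ∧ p.2 ≤ N + H ∧ p.1^3 + p.2^3 = m := by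
    intro p hp
    rw [hSdef, Finset.mem_filter, Finset.mem_product, Finset.mem_Icc, Finset.mem_Icc] at hp
    tauto
  obtain ⟨hu₀1, hu₀2, hv₀1, hv₀2, hm₀⟩ := memS _ hp₀
  dsimp only at hu₀1 hu₀2 hv₀1 hv₀2 hm₀
  have hm0 : 0 < m := by
    have h1 : 0 < u₀ := by omega
    have h2 : 0 < u₀^3 := pow_pos h1 3
    rw [← hm₀]
    omega
  set M : ℕ := 4*m with hMdef
  have hM0 : 0 < M := by omega
  have hm8 : 8*(N:ℝ)^3 ≤ (M:ℝ) := by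
    have h1 : N^3 ≤ u₀^3 := Nat.pow_le_pow_left hu₀1 3
    have h2 : N^3 ≤ v₀^3 := Nat.pow_le_pow_left hv₀1 3
    have h3 : 2*N^3 ≤ m := by rw [← hm₀]; linarith
    have h4 : (2*(N:ℝ)^3 : ℝ) ≤ (m:ℝ) := by exact_mod_cast h3
    push_cast [hMdef]
    linarith
  have hcube1 : (1:ℝ) ≤ (N:ℝ)^3 := by
    calc (1:ℝ) = 1^3 := by norm_num
      _ ≤ (N:ℝ)^3 := pow_le_pow_left₀ (by norm_num) hN1 3
  have hM8 : (8:ℝ) ≤ (M:ℝ) := by linarith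
  have hM1 : (1:ℝ) < (M:ℝ) := by linarith
  set Δ : ℝ := 12*(N:ℝ)^((7:ℝ)/3-2*ε) with hΔdef
  have hΔ0 : 0 < Δ := by positivity
  have hΔ4 : Δ ≤ 4*(N:ℝ)^3 := by
    have h1 : (N:ℝ)^((7:ℝ)/3-2*ε) ≤ (N:ℝ)^((7:ℝ)/3) :=
      Real.rpow_le_rpow_of_exponent_le hN1 (by linarith)
    have h2 : (N:ℝ)^((7:ℝ)/3) * (N:ℝ)^((2:ℝ)/3) = (N:ℝ)^3 := by
      rw [← Real.rpow_add hN0, ← Real.rpow_natCast (N:ℝ) 3]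
      norm_num
    have h3 : 0 < (N:ℝ)^((7:ℝ)/3) := Real.rpow_pos_of_pos hN0 _
    have h4 : 12*(N:ℝ)^((7:ℝ)/3) ≤ 4*((N:ℝ)^((7:ℝ)/3) * (N:ℝ)^((2:ℝ)/3)) := by
      have h5 := mul_le_mul_of_nonneg_left hN23 h3.le
      linarith
    linarith
  have hMΔ : 4*(N:ℝ)^3 ≤ (M:ℝ) - Δ := by linarith
  have hN3pos : (0:ℝ) < (N:ℝ)^3 := by positivity
  have hMΔ0 : (0:ℝ) < (M:ℝ) - Δ := by linarith
  set L : ℝ := ((M:ℝ) - Δ)^((1:ℝ)/3) with hLdef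
  have hL0 : 0 < L := Real.rpow_pos_of_pos hMΔ0 _
  have hL3 : L^3 = (M:ℝ) - Δ := by
    rw [hLdef, ← Real.rpow_natCast (((M:ℝ) - Δ)^((1:ℝ)/3)) 3, ← Real.rpow_mul hMΔ0.le]
    norm_num
  have cube_root_cube : ∀ x : ℝ, 0 ≤ x → (x^3)^((1:ℝ)/3) = x := by
    intro x hx
    rw [← Real.rpow_natCast x 3, ← Real.rpow_mul hx]
    norm_num
  have hLN : (N:ℝ) ≤ L := by
    have h1 : ((N:ℝ)^3)^((1:ℝ)/3) ≤ L := by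
      rw [hLdef]
      exact Real.rpow_le_rpow (by positivity) (by linarith) (by norm_num)
    rwa [cube_root_cube _ hN0.le] at h1
  have hL1 : (1:ℝ) < L := by
    have : (8:ℝ) ≤ N := by exact_mod_cast hN8
    linarith
  set a : ℝ := (M:ℝ)^((1:ℝ)/3) with hadef
  have ha0 : 0 < a := Real.rpow_pos_of_pos (by linarith) _
  have ha3 : a^3 = (M:ℝ) := by
    rw [hadef, ← Real.rpow_natCast ((M:ℝ)^((1:ℝ)/3)) 3, ← Real.rpow_mul (by linarith : (0:ℝ) ≤ M)]
    norm_num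
  have hLa : L ≤ a := by
    rw [hLdef, hadef]
    exact Real.rpow_le_rpow hMΔ0.le (by linarith) (by norm_num)
  have haM : a < (M:ℝ) := by
    have := Real.rpow_lt_rpow_of_exponent_lt hM1 (show (1:ℝ)/3 < 1 by norm_num)
    rwa [Real.rpow_one] at this
  set α : ℝ := Real.log L / Real.log M with hαdef
  have hlogM0 : 0 < Real.log M := Real.log_pos hM1
  have hMα : (M:ℝ)^α = L := by
    rw [hαdef, Real.rpow_def_of_pos (by positivity : (0:ℝ) < (M:ℝ)), mul_comm,
      div_mul_cancel₀ _ hlogM0.ne', Real.exp_log hL0]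
  have hα0 : 0 < α := div_pos (Real.log_pos hL1) hlogM0
  have hα1 : α < 1 := (div_lt_one hlogM0).mpr (Real.log_lt_log hL0 (lt_of_le_of_lt hLa haM))
  set t : ℝ := 1/(9*Real.log N) with htdef
  have ht0 : 0 < t := by positivity
  have hlogM3 : 3*Real.log N ≤ Real.log M := by
    have h1 : ((N:ℝ)^3 : ℝ) ≤ (M:ℝ) := by linarith
    have h2 := Real.log_le_log (by positivity) h1
    rwa [Real.log_pow, Nat.cast_ofNat] at h2
  have hα13 : 1/3 - t ≤ α := by
    have hlogL : (Real.log M - Real.log 2)/3 ≤ Real.log L := by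
      have h1 : (M:ℝ)/2 ≤ L^3 := by rw [hL3]; linarith
      have h2 := Real.log_le_log (by linarith : (0:ℝ) < (M:ℝ)/2) h1
      rw [Real.log_pow, Real.log_div (by linarith) (by norm_num)] at h2
      push_cast at h2
      linarith
    have hlog2 : Real.log 2 ≤ 1 := by
      have := Real.log_two_lt_d9
      linarith
    have h3 : Real.log 2 / (3*Real.log M) ≤ t := by
      rw [htdef]
      apply div_le_div₀ (by positivity) hlog2 (by positivity)
      linarith
    have h4 : (Real.log M - Real.log 2)/(3*Real.log M) ≤ α := by
      rw [hαdef]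
      rw [div_le_div_iff₀ (by positivity) hlogM0]
      have h6 := mul_le_mul_of_nonneg_right hlogL (by positivity : (0:ℝ) ≤ 3*Real.log M)
      linarith
    have h5 : (Real.log M - Real.log 2)/(3*Real.log M) = 1/3 - Real.log 2/(3*Real.log M) := by
      field_simp
    linarith
  have ht38 : t ≤ 3*ε'/8 := by
    have h : 8 ≤ Real.log N * (27*ε') := by
      rw [div_le_iff₀ (by positivity)] at hlogN
      exact hlogN
    rw [htdef, div_le_div_iff₀ (by positivity) (by norm_num)]
    linarith
  have ht3 : t ≤ 1/3 := by
    rw [htdef, div_le_div_iff₀ (by positivity) (by norm_num)]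
    linarith
  have hα2 : 1/9 - 2*t/3 ≤ α^2 := by
    have k1 : 0 ≤ (α - (1/3 - t)) * (α + (1/3 - t)) :=
      mul_nonneg (by linarith) (by linarith)
    have k2 : (α - (1/3 - t)) * (α + (1/3 - t)) = α^2 - (1/9 - 2*t/3 + t^2) := by ring
    have k4 : (0:ℝ) ≤ t^2 := sq_nonneg t
    linarith
  have hαβ : ε'/4 ≤ α^2 - β := by rw [hβdef]; linarith
  have hβα : β < α^2 := sub_pos.mp (lt_of_lt_of_le (div_pos hε'pos (by norm_num)) hαβ)
  -- the divisor set
  set T : Finset ℕ := M.divisors.filter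
      (fun d : ℕ => (M : ℝ) ^ α ≤ (d : ℝ) ∧ (d : ℝ) ≤ (M : ℝ) ^ α + (M : ℝ) ^ β) with hTdef
  have hT : (T.card : ℝ) ≤ C₀ / (α ^ 2 - β) := hdiv α β hα0 hα1 hβ0 hβα M hM0
  -- counting: S.card ≤ 2 * T.card
  have hmaps : ∀ p ∈ S, p.1 + p.2 ∈ T := by
    intro p hp
    obtain ⟨hu1, hu2, hv1, hv2, hm⟩ := memS p hp
    obtain ⟨u, v⟩ := p
    simp only at hu1 hu2 hv1 hv2 hm
    set d : ℕ := u + v with hddef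
    have hdvd : d ∣ M := by
      have h1 : (d:ℤ) ∣ (m:ℤ) := ⟨(u:ℤ)^2 - u*v + v^2, by push_cast [← hm, hddef]; ring⟩
      exact Dvd.dvd.mul_left (Int.natCast_dvd_natCast.mp h1) 4
    have hd2N : 2*N ≤ d := by omega
    have hd4N : (d:ℝ) ≤ 4*N := by
      have : d ≤ 4*N := by omega
      exact_mod_cast this
    have hMcast : (M:ℝ) = 4*((u:ℝ)^3+(v:ℝ)^3) := by
      rw [hMdef]; push_cast [← hm]; ring
    have hid : (M:ℝ) = (d:ℝ)^3 + 3*(d:ℝ)*((u:ℝ)-(v:ℝ))^2 := by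
      rw [hMcast, hddef]; push_cast; ring
    have huv : ((u:ℝ)-(v:ℝ))^2 ≤ Hr^2 := by
      have h1 : (u:ℝ) ≤ N + Hr := by
        have : (u:ℝ) ≤ N + H := by exact_mod_cast hu2
        linarith
      have h2 : (N:ℝ) ≤ u := by exact_mod_cast hu1
      have h3 : (v:ℝ) ≤ N + Hr := by
        have : (v:ℝ) ≤ N + H := by exact_mod_cast hv2
        linarith
      have h4 : (N:ℝ) ≤ v := by exact_mod_cast hv1
      have k1 : (u:ℝ) - v ≤ Hr := by linarith
      have k2 : -Hr ≤ (u:ℝ) - v := by linarith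
      exact sq_le_sq' k2 k1
    have hΔeq : 12*(N:ℝ)*Hr^2 ≤ Δ := by
      have h1 : Hr^2 = (N:ℝ)^((4:ℝ)/3 - 2*ε) := by
        rw [hHrdef, ← Real.rpow_natCast ((N:ℝ)^(2/3-ε)) 2, ← Real.rpow_mul hN0.le]
        norm_num
        congr 1
        ring
      have h2 : (N:ℝ)*(N:ℝ)^((4:ℝ)/3 - 2*ε) = (N:ℝ)^((7:ℝ)/3 - 2*ε) := by
        nth_rewrite 1 [← Real.rpow_one (N:ℝ)]
        rw [← Real.rpow_add hN0]
        ring_nf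
      calc 12*(N:ℝ)*Hr^2 = 12*((N:ℝ)*(N:ℝ)^((4:ℝ)/3 - 2*ε)) := by rw [h1]; ring
        _ = 12*(N:ℝ)^((7:ℝ)/3 - 2*ε) := by rw [h2]
        _ ≤ Δ := le_of_eq hΔdef.symm
    have hMd : (M:ℝ) - Δ ≤ (d:ℝ)^3 := by
      have h1 : 3*(d:ℝ)*((u:ℝ)-(v:ℝ))^2 ≤ 12*(N:ℝ)*Hr^2 := by
        have hd0 : (0:ℝ) ≤ (d:ℝ) := Nat.cast_nonneg _
        have k := mul_le_mul (show 3*(d:ℝ) ≤ 12*N by linarith) huv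
          (sq_nonneg ((u:ℝ)-(v:ℝ))) (by positivity)
        linarith
      linarith [hid, hΔeq]
    have hdM : (d:ℝ)^3 ≤ (M:ℝ) := by
      have k : (0:ℝ) ≤ 3*(d:ℝ)*((u:ℝ)-(v:ℝ))^2 := by positivity
      linarith
    have hd0 : (0:ℝ) ≤ (d:ℝ) := Nat.cast_nonneg _
    have hLd : L ≤ (d:ℝ) := by
      have h1 : ((M:ℝ) - Δ)^((1:ℝ)/3) ≤ ((d:ℝ)^3)^((1:ℝ)/3) :=
        Real.rpow_le_rpow hMΔ0.le hMd (by norm_num)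
      rwa [cube_root_cube _ hd0, ← hLdef] at h1
    have hda : (d:ℝ) ≤ a := by
      have h1 : ((d:ℝ)^3)^((1:ℝ)/3) ≤ (M:ℝ)^((1:ℝ)/3) :=
        Real.rpow_le_rpow (by positivity) hdM (by norm_num)
      rwa [cube_root_cube _ hd0, ← hadef] at h1
    have haL : a - L ≤ (M:ℝ)^β := by
      have hkey : (a - L)*(3*(N:ℝ)^2) ≤ Δ := by
        have expand : a^3 - L^3 = (a-L)*(a^2+a*L+L^2) := by ring
        have hΔval : a^3 - L^3 = Δ := by rw [ha3, hL3]; ring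
        have k1 : 0 ≤ a - L := by linarith
        have k2 : (N:ℝ)^2 ≤ L^2 := pow_le_pow_left₀ hN0.le hLN 2
        have k3 : L^2 ≤ a^2 := pow_le_pow_left₀ hL0.le hLa 2
        have k4 : (N:ℝ)^2 ≤ a*L := by
          have k := mul_le_mul (hLN.trans hLa) hLN hN0.le ha0.le
          calc (N:ℝ)^2 = (N:ℝ)*(N:ℝ) := by ring
            _ ≤ a*L := k
        have k5 : 3*(N:ℝ)^2 ≤ a^2+a*L+L^2 := by linarith
        have k6 : (a-L)*(3*(N:ℝ)^2) ≤ (a-L)*(a^2+a*L+L^2) :=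
          mul_le_mul_of_nonneg_left k5 k1
        linarith
      have hq : a - L ≤ 4*(N:ℝ)^((1:ℝ)/3-2*ε) := by
        have hNq : (0:ℝ) < 3*(N:ℝ)^2 := by positivity
        rw [← le_div_iff₀ hNq] at hkey
        refine le_trans hkey ?_
        rw [div_le_iff₀ hNq]
        have h2 : 4*(N:ℝ)^((1:ℝ)/3-2*ε)*(3*(N:ℝ)^2) = 12*((N:ℝ)^((1:ℝ)/3-2*ε)*(N:ℝ)^((2:ℝ))) := by
          rw [← Real.rpow_natCast (N:ℝ) 2]
          push_cast
          ring
        have h3 : (N:ℝ)^((1:ℝ)/3-2*ε)*(N:ℝ)^((2:ℝ)) = (N:ℝ)^((7:ℝ)/3-2*ε) := by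
          rw [← Real.rpow_add hN0]; ring_nf
        rw [h2, h3, hΔdef]
      have hq2 : 4*(N:ℝ)^((1:ℝ)/3-2*ε) ≤ (M:ℝ)^β := by
        have h1 : (N:ℝ)^(3*β) ≤ (M:ℝ)^β := by
          have h2 : ((N:ℝ)^((3:ℝ)))^β ≤ (M:ℝ)^β := by
            refine Real.rpow_le_rpow (by positivity) ?_ hβ0.le
            have h3' : (N:ℝ)^((3:ℝ)) = (N:ℝ)^(3:ℕ) := by
              rw [← Real.rpow_natCast (N:ℝ) 3]; norm_num
            rw [h3']
            linarith
          rwa [← Real.rpow_mul hN0.le] at h2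
        have h3 : (N:ℝ)^e₂ * (N:ℝ)^((1:ℝ)/3-2*ε) ≤ (N:ℝ)^(3*β) := by
          rw [← Real.rpow_add hN0]
          apply Real.rpow_le_rpow_of_exponent_le hN1
          rw [hβdef]
          linarith
        have h4 : 0 < (N:ℝ)^((1:ℝ)/3-2*ε) := Real.rpow_pos_of_pos hN0 _
        have k := mul_le_mul_of_nonneg_right hNe2 h4.le
        linarith
      linarith
    -- conclude membership in T
    rw [hTdef, Finset.mem_filter, Nat.mem_divisors]
    refine ⟨⟨hdvd, by omega⟩, ?_, ?_⟩
    · rw [hMα]; exact hLd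
    · rw [hMα]; linarith
  have hfib : ∀ d ∈ T, (S.filter (fun p => p.1 + p.2 = d)).card ≤ 2 := by
    intro d _
    rcases (S.filter (fun p => p.1 + p.2 = d)).eq_empty_or_nonempty with he | ⟨⟨x, y⟩, hq⟩
    · rw [he]; simp
    have hq' := Finset.mem_filter.mp hq
    obtain ⟨hx1, _, hy1, _, hmq⟩ := memS _ hq'.1
    have hdq : x + y = d := hq'.2
    have hsub : S.filter (fun p => p.1 + p.2 = d) ⊆ {(x, y), (y, x)} := by
      rintro ⟨u, v⟩ hp
      have hp' := Finset.mem_filter.mp hp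
      obtain ⟨hu1, _, hv1, _, hmp⟩ := memS _ hp'.1
      have hdp : u + v = d := hp'.2
      have hd0 : (d:ℤ) ≠ 0 := by
        have h0 : 0 < d := by omega
        exact Int.natCast_ne_zero.mpr h0.ne'
      have h3 : (u:ℤ)^3+(v:ℤ)^3 = (x:ℤ)^3+(y:ℤ)^3 := by
        have : u^3+v^3 = x^3+y^3 := hmp.trans hmq.symm
        exact_mod_cast this
      have h1 : (u:ℤ) + v = d := by exact_mod_cast hdp
      have h2 : (x:ℤ) + y = d := by exact_mod_cast hdq
      rcases pair_eq_of hd0 h2 h1 h3.symm with ⟨ha, hb⟩ | ⟨ha, hb⟩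
      · have e1 : u = x := by exact_mod_cast ha
        have e2 : v = y := by exact_mod_cast hb
        subst e1; subst e2; simp
      · have e1 : u = y := by exact_mod_cast ha
        have e2 : v = x := by exact_mod_cast hb
        subst e1; subst e2; simp
    calc (S.filter (fun p => p.1 + p.2 = d)).card ≤ ({(x, y), (y, x)} : Finset (ℕ × ℕ)).card :=
          Finset.card_le_card hsub
      _ ≤ 2 := by
          refine le_trans (Finset.card_insert_le _ _) ?_
          simp
  have hcard : S.card ≤ 2 * T.card :=
    Finset.card_le_mul_card_image_of_maps_to hmaps 2 hfib
  have hfinal : (S.card : ℝ) ≤ 2 * (C₀ / (α ^ 2 - β)) := by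
    have : (S.card : ℝ) ≤ 2 * (T.card : ℝ) := by exact_mod_cast hcard
    linarith
  have hstep : C₀ / (α ^ 2 - β) ≤ C₀ / (ε'/4) := by
    apply div_le_div_of_nonneg_left hC₀.le (by positivity) hαβ
  have hstep2 : C₀ / (ε'/4) ≤ 24*C₀/ε := by
    rw [div_le_div_iff₀ (by positivity) hε]
    have k := mul_le_mul_of_nonneg_left (show ε ≤ 6*ε' by linarith) hC₀.le
    linarith
  calc (S.card : ℝ) ≤ 2 * (C₀ / (α ^ 2 - β)) := hfinal
    _ ≤ 2 * (C₀ / (ε'/4)) := by linarith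
    _ ≤ 2 * (24*C₀/ε) := by linarith
    _ = 48*C₀/ε := by ring
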